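/- Let (f_n) be a sequence of m-oscillating functions from a nonempty bounded open set Ω ⊂ ℝ^d of Lebesgue measure M > 0 into a common compact set K ⊂ ℝ^d, with total slopes Jt_{f_n}(y) = Σ_{i : y ∈ f_{n,i}(Ω_{n,i})} |det D(f_{n,i}^{-1})(y)|, and with associated (homogeneous) Young measures ρ_n = (f_n)_*λ having densities u_n = (1/M)·Jt_{f_n}. Assume the sequence (Jt_{f_n}) is monotone: for μ-a.e. y ∈ K, the sequence n ↦ Jt_{f_n}(y) is nondecreasing (or, for a.e. y, nonincreasing). Then there exists a probability measure ρ on K, absolutely continuous with respect to Lebesgue measure μ on K with density g ∈ L¹(K, μ), such that ρ_n(A) → ρ(A) for every Borel set A ⊆ K and u_n converges weakly in L¹(K, μ) to g; i.e. the Young measures ρ_n converge weakly to the homogeneous Young measure ρ whose density is the weak L¹ limit of the densities u_n. -/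

import Mathlib

open MeasureTheory Filter Topology Set ENNReal

/-- `f` is an m-oscillating function on `Ω`: `f = fᵢ` on the elements `Ωᵢ` of an (at most
countable) family of pairwise disjoint open subsets of `Ω` whose closures cover `closure Ω`;
each `fᵢ` maps `Ωᵢ` homeomorphically onto its open image, with local inverse `gᵢ` that is
continuously differentiable on that image. -/
def IsMOscillating {d : ℕ} (Ω : Set (Fin d → ℝ)) (f : (Fin d → ℝ) → (Fin d → ℝ))
    (Ωi : ℕ → Set (Fin d → ℝ)) (fi gi : ℕ → (Fin d → ℝ) → (Fin d → ℝ)) : Prop :=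
  (∀ i, IsOpen (Ωi i)) ∧ (∀ i, Ωi i ⊆ Ω) ∧
  (Pairwise fun i j => Disjoint (Ωi i) (Ωi j)) ∧
  (⋃ i, closure (Ωi i)) = closure Ω ∧
  (∀ i, ContinuousOn (fi i) (Ωi i)) ∧
  (∀ i, IsOpen (fi i '' Ωi i)) ∧
  (∀ i, ∀ x ∈ Ωi i, gi i (fi i x) = x) ∧
  (∀ i, ∀ y ∈ fi i '' Ωi i, fi i (gi i y) = y) ∧
  (∀ i, ContDiffOn ℝ 1 (gi i) (fi i '' Ωi i)) ∧
  (∀ i, ∀ x ∈ Ωi i, f x = fi i x)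

/-- The total slope `Jt_f(y) = ∑_{i : y ∈ fᵢ(Ωᵢ)} |det D(fᵢ⁻¹)(y)|` of an m-oscillating
function. -/
noncomputable def totalSlope {d : ℕ} (Ωi : ℕ → Set (Fin d → ℝ))
    (fi gi : ℕ → (Fin d → ℝ) → (Fin d → ℝ)) (y : Fin d → ℝ) : ℝ :=
  ∑' i, Set.indicator (fi i '' Ωi i) (fun z => |(fderiv ℝ (gi i) z).det|) y

/-- `uₙ ⇀ h` weakly in `L¹(K, μ)`: the integrals against every bounded measurable function
(i.e. every element of `L^∞(K, μ)`) converge. -/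
def WeakL1Tendsto {X : Type*} [MeasurableSpace X] (μ : Measure X)
    (u : ℕ → X → ℝ) (h : X → ℝ) : Prop :=
  ∀ g : X → ℝ, Measurable g → (∃ C : ℝ, ∀ x, |g x| ≤ C) →
    Tendsto (fun n => ∫ x, u n x * g x ∂μ) atTop (nhds (∫ x, h x * g x ∂μ))

/-- Let `(fₙ)` be a sequence of m-oscillating functions from a nonempty bounded open
`Ω ⊂ ℝᵈ` into a compact set `K ⊂ ℝᵈ`, whose associated homogeneous Young measures
`ρₙ = (fₙ)_*λ` have densities `uₙ = (1/M)·Jt_{fₙ}` with respect to Lebesgue measure `μ` on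
`K`. If the sequence of total slopes `(Jt_{fₙ})` is monotone (a.e. nondecreasing or a.e.
nonincreasing), then the Young measures `ρₙ` converge weakly to a homogeneous Young measure
`ρ`: there is a probability measure `ρ = μ.withDensity g` with density `g ∈ L¹(K, μ)` such
that `ρₙ(A) → ρ(A)` for every Borel `A ⊆ K` and `uₙ ⇀ g` weakly in `L¹(K, μ)`. -/
lemma aux_mono {X : Type*} [MeasurableSpace X] (μ : Measure X) (u : ℕ → X → ℝ)
    (hpos : ∀ n x, 0 ≤ u n x) (hint : ∀ n, Integrable (u n) μ)
    (hone : ∀ n, ∫⁻ x, ENNReal.ofReal (u n x) ∂μ = 1)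
    (hm : (∀ᵐ x ∂μ, Monotone fun n => u n x) ∨ (∀ᵐ x ∂μ, Antitone fun n => u n x)) :
    ∃ g : X → ℝ, Integrable g μ ∧ 0 ≤ᵐ[μ] g ∧
      (∫⁻ x, ENNReal.ofReal (g x) ∂μ = 1) ∧
      (∀ A : Set X, MeasurableSet A →
        Tendsto (fun n => ∫⁻ x in A, ENNReal.ofReal (u n x) ∂μ) atTop
          (nhds (∫⁻ x in A, ENNReal.ofReal (g x) ∂μ))) ∧
      WeakL1Tendsto μ u g := by
  set v : ℕ → X → ℝ≥0∞ := fun n x => ENNReal.ofReal (u n x) with hv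
  have hvmeas : ∀ n, AEMeasurable (v n) μ := fun n =>
    ENNReal.measurable_ofReal.comp_aemeasurable (hint n).aemeasurable
  rcases hm with hm | hm
  · -- monotone case
    have hvmono : ∀ᵐ x ∂μ, Monotone fun n => v n x :=
      hm.mono fun x hx i j hij => ENNReal.ofReal_le_ofReal (hx hij)
    set G : X → ℝ≥0∞ := fun x => ⨆ n, v n x with hG
    have hGmeas : AEMeasurable G μ := AEMeasurable.iSup hvmeas
    have hGint : ∫⁻ x, G x ∂μ = 1 := by
      rw [hG]; rw [lintegral_iSup' hvmeas hvmono]; simp [hv, hone]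
    have hGfin : ∀ᵐ x ∂μ, G x < ∞ := ae_lt_top' hGmeas (by rw [hGint]; exact one_ne_top)
    refine ⟨fun x => (G x).toReal, integrable_toReal_of_lintegral_ne_top hGmeas
      (by rw [hGint]; exact one_ne_top), ae_of_all _ fun x => ENNReal.toReal_nonneg, ?_, ?_, ?_⟩
    · have hgae : ∀ᵐ x ∂μ, ENNReal.ofReal (G x).toReal = G x :=
        hGfin.mono fun x hx => ENNReal.ofReal_toReal hx.ne
      rw [lintegral_congr_ae hgae, hGint]
    · intro A hA
      have hgae : ∀ᵐ x ∂μ, ENNReal.ofReal (G x).toReal = G x :=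
        hGfin.mono fun x hx => ENNReal.ofReal_toReal hx.ne
      have h1 : ∫⁻ x in A, ENNReal.ofReal (G x).toReal ∂μ = ∫⁻ x in A, G x ∂μ :=
        lintegral_congr_ae (ae_restrict_of_ae hgae)
      have h2 : ∫⁻ x in A, G x ∂μ = ⨆ n, ∫⁻ x in A, v n x ∂μ :=
        lintegral_iSup' (fun n => (hvmeas n).restrict) (ae_restrict_of_ae hvmono)
      have hmono' : Monotone fun n => ∫⁻ x in A, v n x ∂μ := fun i j hij =>
        lintegral_mono_ae ((ae_restrict_of_ae hvmono).mono fun x hx => hx hij)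
      rw [h1, h2]
      exact tendsto_atTop_iSup hmono'
    · intro φ hφm ⟨C, hC⟩
      have hle : ∀ n, ∀ᵐ x ∂μ, u n x ≤ (G x).toReal := fun n =>
        hGfin.mono fun x hx => by
          have : u n x = (v n x).toReal := (ENNReal.toReal_ofReal (hpos n x)).symm
          rw [this]
          exact ENNReal.toReal_mono hx.ne (le_iSup (fun n => v n x) n)
      refine tendsto_integral_of_dominated_convergence (fun x => (G x).toReal * C)
        (fun n => (hint n).aestronglyMeasurable.mul hφm.aestronglyMeasurable)
        ((integrable_toReal_of_lintegral_ne_top hGmeas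
          (by rw [hGint]; exact one_ne_top)).mul_const C) (fun n => ?_) ?_
      · filter_upwards [hle n] with x hx
        rw [norm_mul, Real.norm_eq_abs, Real.norm_eq_abs, abs_of_nonneg (hpos n x)]
        exact mul_le_mul hx (hC x) (abs_nonneg _) ENNReal.toReal_nonneg
      · filter_upwards [hvmono, hGfin] with x hx hfin
        have h1 : Tendsto (fun n => v n x) atTop (nhds (G x)) := tendsto_atTop_iSup hx
        have h2 : Tendsto (fun n => (v n x).toReal) atTop (nhds (G x).toReal) :=
          (ENNReal.tendsto_toReal hfin.ne).comp h1
        have h3 : Tendsto (fun n => u n x) atTop (nhds (G x).toReal) :=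
          h2.congr fun n => ENNReal.toReal_ofReal (hpos n x)
        exact h3.mul_const (φ x)
  · -- antitone case
    have hvanti : ∀ᵐ x ∂μ, Antitone fun n => v n x :=
      hm.mono fun x hx i j hij => ENNReal.ofReal_le_ofReal (hx hij)
    set G : X → ℝ≥0∞ := fun x => ⨅ n, v n x with hG
    have hGmeas : AEMeasurable G μ := AEMeasurable.iInf hvmeas
    have hGfin : ∀ x, G x < ∞ := fun x =>
      lt_of_le_of_lt (iInf_le (fun n => v n x) 0) ENNReal.ofReal_lt_top
    have hGint : ∫⁻ x, G x ∂μ = 1 := by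
      rw [hG, lintegral_iInf' hvmeas hvanti (by rw [hone 0]; exact one_ne_top)]
      simp [hv, hone]
    have hgae : ∀ x, ENNReal.ofReal (G x).toReal = G x := fun x =>
      ENNReal.ofReal_toReal (hGfin x).ne
    refine ⟨fun x => (G x).toReal, integrable_toReal_of_lintegral_ne_top hGmeas
      (by rw [hGint]; exact one_ne_top), ae_of_all _ fun x => ENNReal.toReal_nonneg, ?_, ?_, ?_⟩
    · rw [lintegral_congr fun x => hgae x, hGint]
    · intro A hA
      have h1 : ∫⁻ x in A, ENNReal.ofReal (G x).toReal ∂μ = ∫⁻ x in A, G x ∂μ :=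
        lintegral_congr fun x => hgae x
      have h2 : ∫⁻ x in A, G x ∂μ = ⨅ n, ∫⁻ x in A, v n x ∂μ := by
        refine lintegral_iInf' (fun n => (hvmeas n).restrict) (ae_restrict_of_ae hvanti) ?_
        refine ne_top_of_le_ne_top ?_ (setLIntegral_le_lintegral A (v 0))
        rw [hone 0]; exact one_ne_top
      have hanti' : Antitone fun n => ∫⁻ x in A, v n x ∂μ := fun i j hij =>
        lintegral_mono_ae ((ae_restrict_of_ae hvanti).mono fun x hx => hx hij)
      rw [h1, h2]
      exact tendsto_atTop_iInf hanti'
    · intro φ hφm ⟨C, hC⟩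
      have hle : ∀ n, ∀ᵐ x ∂μ, u n x ≤ u 0 x := fun n =>
        hm.mono fun x hx => hx (Nat.zero_le n)
      refine tendsto_integral_of_dominated_convergence (fun x => u 0 x * C)
        (fun n => (hint n).aestronglyMeasurable.mul hφm.aestronglyMeasurable)
        ((hint 0).mul_const C) (fun n => ?_) ?_
      · filter_upwards [hle n] with x hx
        rw [norm_mul, Real.norm_eq_abs, Real.norm_eq_abs, abs_of_nonneg (hpos n x)]
        exact mul_le_mul hx (hC x) (abs_nonneg _) (hpos 0 x)
      · filter_upwards [hvanti] with x hx
        have h1 : Tendsto (fun n => v n x) atTop (nhds (G x)) := tendsto_atTop_iInf hx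
        have h2 : Tendsto (fun n => (v n x).toReal) atTop (nhds (G x).toReal) :=
          (ENNReal.tendsto_toReal (hGfin x).ne).comp h1
        exact (h2.congr fun n => ENNReal.toReal_ofReal (hpos n x)).mul_const (φ x)

theorem youngMeasures_weak_conv_of_monotone_totalSlopes
    {d : ℕ} (Ω : Set (Fin d → ℝ)) (hΩo : IsOpen Ω) (hΩne : Ω.Nonempty)
    (hΩb : Bornology.IsBounded Ω)
    (K : Set (Fin d → ℝ)) (hK : IsCompact K)
    (lam : Measure (Fin d → ℝ)) (hlam : lam = (volume Ω)⁻¹ • volume.restrict Ω)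
    (μ : Measure (Fin d → ℝ)) (hμ : μ = volume.restrict K)
    (f : ℕ → (Fin d → ℝ) → (Fin d → ℝ))
    (hfm : ∀ n, Measurable (f n)) (hfK : ∀ n, ∀ x ∈ Ω, f n x ∈ K)
    (Ωi : ℕ → ℕ → Set (Fin d → ℝ)) (fi gi : ℕ → ℕ → (Fin d → ℝ) → (Fin d → ℝ))
    (hosc : ∀ n, IsMOscillating Ω (f n) (Ωi n) (fi n) (gi n))
    (u : ℕ → (Fin d → ℝ) → ℝ)
    (hu : ∀ n y, u n y = (volume Ω).toReal⁻¹ * totalSlope (Ωi n) (fi n) (gi n) y)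
    (huint : ∀ n, Integrable (u n) μ)
    (hdens : ∀ n, Measure.map (f n) lam
      = μ.withDensity (fun y => ENNReal.ofReal (u n y)))
    (hmono : (∀ᵐ y ∂μ, Monotone fun n => totalSlope (Ωi n) (fi n) (gi n) y)
      ∨ (∀ᵐ y ∂μ, Antitone fun n => totalSlope (Ωi n) (fi n) (gi n) y)) :
    ∃ g : (Fin d → ℝ) → ℝ, Integrable g μ ∧ 0 ≤ᵐ[μ] g ∧
      IsProbabilityMeasure (μ.withDensity (fun y => ENNReal.ofReal (g y)))
      ∧ (∀ A : Set (Fin d → ℝ), MeasurableSet A →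
          Tendsto (fun n => Measure.map (f n) lam A) atTop
            (nhds (μ.withDensity (fun y => ENNReal.ofReal (g y)) A)))
      ∧ WeakL1Tendsto μ u g := by

  classical
  -- basic facts about Ω's volume
  have hvol0 : volume Ω ≠ 0 := (hΩo.measure_pos volume hΩne).ne'
  have hvoltop : volume Ω ≠ ∞ := hΩb.measure_lt_top.ne
  have hlam1 : lam Set.univ = 1 := by
    rw [hlam, Measure.smul_apply, Measure.restrict_apply_univ, smul_eq_mul]
    exact ENNReal.inv_mul_cancel hvol0 hvoltop
  -- each density integrates to 1
  have hone : ∀ n, ∫⁻ x, ENNReal.ofReal (u n x) ∂μ = 1 := by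
    intro n
    have h := congrArg (fun m : Measure (Fin d → ℝ) => m Set.univ) (hdens n)
    simp only [Measure.map_apply (hfm n) MeasurableSet.univ, Set.preimage_univ,
      withDensity_apply _ MeasurableSet.univ, Measure.restrict_univ, hlam1] at h
    exact h.symm
  -- nonnegativity of densities
  have hpos : ∀ n x, 0 ≤ u n x := by
    intro n x
    rw [hu]
    refine mul_nonneg (inv_nonneg.2 ENNReal.toReal_nonneg) ?_
    exact tsum_nonneg fun i => Set.indicator_nonneg (fun z _ => abs_nonneg _) _
  -- monotonicity transfers to u
  have hm : (∀ᵐ x ∂μ, Monotone fun n => u n x) ∨ (∀ᵐ x ∂μ, Antitone fun n => u n x) := by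
    have hc : (0:ℝ) ≤ (volume Ω).toReal⁻¹ := inv_nonneg.2 ENNReal.toReal_nonneg
    rcases hmono with h | h
    · exact Or.inl (h.mono fun y hy i j hij => by
        simp only [hu]; exact mul_le_mul_of_nonneg_left (hy hij) hc)
    · exact Or.inr (h.mono fun y hy i j hij => by
        simp only [hu]; exact mul_le_mul_of_nonneg_left (hy hij) hc)
  obtain ⟨g, hgint, hgpos, hg1, hgset, hgweak⟩ := aux_mono μ u hpos huint hone hm
  refine ⟨g, hgint, hgpos, ?_, ?_, hgweak⟩
  · constructor
    rw [withDensity_apply _ MeasurableSet.univ, Measure.restrict_univ]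
    exact hg1
  · intro A hA
    have h1 : ∀ n, Measure.map (f n) lam A = ∫⁻ x in A, ENNReal.ofReal (u n x) ∂μ := by
      intro n; rw [hdens n, withDensity_apply _ hA]
    have h2 : μ.withDensity (fun y => ENNReal.ofReal (g y)) A
        = ∫⁻ x in A, ENNReal.ofReal (g x) ∂μ := withDensity_apply _ hA
    rw [h2]
    exact (hgset A hA).congr fun n => (h1 n).symm
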